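/- Let α₋ ≤ α₊ and β₋ ≤ β₊ be integers and let κ₂₁, κ₂₂, κ₃₁, κ₁₂ be nonnegative integers. Then the following are equivalent: (1) there exist nonnegative integers κ₁₁, κ₁₃, κ₂₃, κ₃₂, κ₃₃, N₋, N₊, M₋, M₊ such that κ₁₁+κ₁₂+κ₁₃ = M₋, κ₂₁+κ₂₂+κ₂₃ = α₊−α₋, κ₃₁+κ₃₂+κ₃₃ = M₊, κ₁₁+κ₂₁+κ₃₁ = N₋, κ₁₂+κ₂₂+κ₃₂ = β₊−β₋, κ₁₃+κ₂₃+κ₃₃ = N₊, M₋−α₋ = N₋−β₋, and M₊+α₊ = N₊+β₊; (2) κ₁₂+κ₂₂ ≤ β₊−β₋, κ₂₁+κ₂₂ ≤ α₊−α₋, and κ₂₁+κ₃₁+α₋ ≥ κ₁₂+β₋. -/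
import Mathlib

/-- Solvability of the block-size equations: for integers
`α₋ ≤ α₊`, `β₋ ≤ β₊` and nonnegative integers `κ₂₁, κ₂₂, κ₃₁, κ₁₂`, the ten equations
of the lemma admit a solution in nonnegative integers
`κ₁₁, κ₁₃, κ₂₃, κ₃₂, κ₃₃, N₋, N₊, M₋, M₊` if and only if
`κ₁₂ + κ₂₂ ≤ β₊ − β₋`, `κ₂₁ + κ₂₂ ≤ α₊ − α₋` and `κ₂₁ + κ₃₁ + α₋ ≥ κ₁₂ + β₋`. -/
theorem cone_description (α₁ α₂ β₁ β₂ : ℤ) (hα : α₁ ≤ α₂) (hβ : β₁ ≤ β₂)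
    (κ21 κ22 κ31 κ12 : ℕ) :
    (∃ κ11 κ13 κ23 κ32 κ33 N₁ N₂ M₁ M₂ : ℕ,
      (κ11 : ℤ) + κ12 + κ13 = M₁ ∧
      (κ21 : ℤ) + κ22 + κ23 = α₂ - α₁ ∧
      (κ31 : ℤ) + κ32 + κ33 = M₂ ∧
      (κ11 : ℤ) + κ21 + κ31 = N₁ ∧
      (κ12 : ℤ) + κ22 + κ32 = β₂ - β₁ ∧
      (κ13 : ℤ) + κ23 + κ33 = N₂ ∧
      (M₁ : ℤ) - α₁ = (N₁ : ℤ) - β₁ ∧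
      (M₂ : ℤ) + α₂ = (N₂ : ℤ) + β₂) ↔
    ((κ12 : ℤ) + κ22 ≤ β₂ - β₁ ∧ (κ21 : ℤ) + κ22 ≤ α₂ - α₁ ∧
      (κ21 : ℤ) + κ31 + α₁ ≥ (κ12 : ℤ) + β₁) := by
  constructor
  · rintro ⟨κ11, κ13, κ23, κ32, κ33, N₁, N₂, M₁, M₂, h1, h2, h3, h4, h5, h6, h7, h8⟩
    omega
  · rintro ⟨h1, h2, h3⟩
    refine ⟨0, ((κ21:ℤ)+κ31+α₁-κ12-β₁).toNat, (α₂-α₁-κ21-κ22).toNat,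
      (β₂-β₁-κ12-κ22).toNat, 0, κ21+κ31,
      ((κ21:ℤ)+κ31+α₁-κ12-β₁).toNat + (α₂-α₁-κ21-κ22).toNat,
      κ12 + ((κ21:ℤ)+κ31+α₁-κ12-β₁).toNat,
      κ31 + (β₂-β₁-κ12-κ22).toNat,
      ?_, ?_, ?_, ?_, ?_, ?_, ?_, ?_⟩ <;> push_cast <;> omega
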